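/- Let α, β, γ ∈ (0,1). (i) If α + γ > 1, then for every q ∈ [0, 1−α] there exists a constant C > 0, depending only on α, β, γ, q, such that 𝔅_2(a,b) ≤ C · |a|^{−q} · |b−a|^{−γ+q} for all real a, b with a ≠ 0 and b − a ≠ 0. (ii) If α + γ < 1, then there exists a constant C > 0, depending only on α, β, γ, such that 𝔅_2(a,b) ≤ C · (|a| + |b−a|)^{−γ} for all real a, b with (a, b−a) ≠ (0,0); consequently, for any q_1, q_2 ≥ 0 with q_1 + q_2 ≤ γ, 𝔅_2(a,b) ≤ C · |a|^{−q_1} · |b−a|^{−q_2} · |b|^{−γ+q_1+q_2} whenever a, b−a, b are all nonzero. -/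

import Mathlib

open MeasureTheory Real ENNReal

/-- `𝔅_1(a,b) := ∫_0^{1/2} u^{−β} (1−u)^{−α} |au − b|^{−γ} du ∈ [0,∞]`. -/
noncomputable def B1 (α β γ a b : ℝ) : ℝ≥0∞ :=
  ∫⁻ u in Set.Ioo (0 : ℝ) (1/2),
    ENNReal.ofReal (u ^ (-β) * (1 - u) ^ (-α) * |a * u - b| ^ (-γ))

/-- `𝔅_2(a,b) := ∫_{1/2}^1 u^{−β} (1−u)^{−α} |au − b|^{−γ} du ∈ [0,∞]`. -/
noncomputable def B2 (α β γ a b : ℝ) : ℝ≥0∞ :=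
  ∫⁻ u in Set.Ioo (1/2 : ℝ) 1,
    ENNReal.ofReal (u ^ (-β) * (1 - u) ^ (-α) * |a * u - b| ^ (-γ))

section helpers
open Set

private lemma rpow_anti {x y c : ℝ} (hx : 0 < x) (hxy : x ≤ y) (hc : 0 ≤ c) :
    y ^ (-c) ≤ x ^ (-c) :=
  Real.rpow_le_rpow_of_nonpos hx hxy (neg_nonpos.mpr hc)

private lemma half_rpow (x : ℝ) : ((1/2 : ℝ)) ^ (-x) = 2 ^ x := by
  rw [one_div, Real.inv_rpow (by norm_num), ← Real.rpow_neg (by norm_num), neg_neg]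

private lemma lintL1 {p : ℝ} (hp : p < 1) (R : ℝ) (hR : 0 < R) :
    ∫⁻ t in Ioo (0:ℝ) R, ENNReal.ofReal (t ^ (-p)) = ENNReal.ofReal (R ^ (1-p) / (1-p)) := by
  have hi : IntervalIntegrable (fun t : ℝ => t ^ (-p)) volume 0 R :=
    intervalIntegral.intervalIntegrable_rpow' (by linarith)
  have hint : IntegrableOn (fun t : ℝ => t ^ (-p)) (Ioo 0 R) := by
    have h2 := (intervalIntegrable_iff_integrableOn_Ioc_of_le hR.le).mp hi
    exact h2.mono_set Ioo_subset_Ioc_self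
  rw [← ofReal_integral_eq_lintegral_ofReal hint ?_]
  · congr 1
    rw [← integral_Ioc_eq_integral_Ioo, ← intervalIntegral.integral_of_le hR.le,
      integral_rpow (Or.inl (by linarith)),
      Real.zero_rpow (by linarith : -p + 1 ≠ 0),
      show -p + 1 = 1 - p by ring]
    ring
  · filter_upwards [ae_restrict_mem measurableSet_Ioo] with t ht
    exact Real.rpow_nonneg ht.1.le _

private lemma lintL2 {p : ℝ} (hp : 1 < p) (R : ℝ) (hR : 0 < R) :
    ∫⁻ t in Ioi R, ENNReal.ofReal (t ^ (-p)) = ENNReal.ofReal (R ^ (1-p) / (p-1)) := by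
  have hint : IntegrableOn (fun t : ℝ => t ^ (-p)) (Ioi R) :=
    integrableOn_Ioi_rpow_of_lt (by linarith) hR
  rw [← ofReal_integral_eq_lintegral_ofReal hint ?_]
  · congr 1
    rw [integral_Ioi_rpow_of_lt (by linarith) hR, show -p + 1 = 1 - p by ring]
    have h1 : (1:ℝ) - p ≠ 0 := by linarith
    have h2 : p - 1 ≠ 0 := by linarith
    field_simp
    ring
  · filter_upwards [ae_restrict_mem measurableSet_Ioi] with t ht
    exact Real.rpow_nonneg (hR.trans ht).le _

private lemma lintL3 {p : ℝ} (hp : p < 1) (t0 M : ℝ) (hM : 0 < M) :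
    ∫⁻ t in Ioo (t0 - M) (t0 + M), ENNReal.ofReal (|t - t0| ^ (-p))
      ≤ ENNReal.ofReal (2 * (M ^ (1-p) / (1-p))) := by
  have h1 : ∫⁻ t in Ioo (t0 - M) t0, ENNReal.ofReal (|t - t0| ^ (-p))
      = ENNReal.ofReal (M ^ (1-p) / (1-p)) := by
    have hpre : (fun t : ℝ => t0 - t) ⁻¹' (Ioo (t0 - M) t0) = Ioo 0 M := by
      ext s; simp only [Set.mem_preimage, Set.mem_Ioo]
      constructor <;> rintro ⟨ha, hb⟩ <;> constructor <;> linarith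
    have hs := (Measure.measurePreserving_sub_left volume t0).setLIntegral_comp_preimage_emb
      (MeasurableEquiv.subLeft t0).measurableEmbedding
      (fun t => ENNReal.ofReal (|t - t0| ^ (-p))) (Ioo (t0 - M) t0)
    rw [hpre] at hs
    rw [← hs, ← lintL1 hp M hM]
    refine setLIntegral_congr_fun measurableSet_Ioo (fun s hs => ?_)
    rw [show t0 - s - t0 = -s by ring, abs_neg, abs_of_pos hs.1]
  have h2 : ∫⁻ t in Ioo t0 (t0 + M), ENNReal.ofReal (|t - t0| ^ (-p))
      = ENNReal.ofReal (M ^ (1-p) / (1-p)) := by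
    have hpre : (fun t : ℝ => t0 + t) ⁻¹' (Ioo t0 (t0 + M)) = Ioo 0 M := by
      ext s; simp only [Set.mem_preimage, Set.mem_Ioo]
      constructor <;> rintro ⟨ha, hb⟩ <;> constructor <;> linarith
    have hs := (measurePreserving_add_left volume t0).setLIntegral_comp_preimage_emb
      (MeasurableEquiv.addLeft t0).measurableEmbedding
      (fun t => ENNReal.ofReal (|t - t0| ^ (-p))) (Ioo t0 (t0 + M))
    rw [hpre] at hs
    rw [← hs, ← lintL1 hp M hM]
    refine setLIntegral_congr_fun measurableSet_Ioo (fun s hs => ?_)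
    rw [show t0 + s - t0 = s by ring, abs_of_pos hs.1]
  have hsplit : Ioo (t0 - M) (t0 + M) = Ioo (t0 - M) t0 ∪ Ico t0 (t0 + M) :=
    (Ioo_union_Ico_eq_Ioo (by linarith) (by linarith)).symm
  rw [hsplit]
  refine le_trans (lintegral_union_le _ _ _) ?_
  rw [h1, setLIntegral_congr (Ioo_ae_eq_Ico (a := t0) (b := t0 + M)).symm, h2,
    ← ENNReal.ofReal_add (div_nonneg (Real.rpow_nonneg hM.le _) (by linarith)) (div_nonneg (Real.rpow_nonneg hM.le _) (by linarith))]
  apply ENNReal.ofReal_le_ofReal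
  have : (0:ℝ) ≤ M ^ (1-p) / (1-p) := div_nonneg (Real.rpow_nonneg hM.le _) (by linarith)
  linarith

private lemma prod_rpow_le {α γ t u : ℝ} (hα : 0 < α) (hγ : 0 < γ) (ht : 0 < t) (hu : 0 ≤ u) :
    t ^ (-α) * u ^ (-γ) ≤ t ^ (-(α+γ)) + u ^ (-(α+γ)) := by
  rcases eq_or_lt_of_le hu with h0 | hu
  · rw [← h0, Real.zero_rpow (neg_ne_zero.mpr (ne_of_gt hγ)), mul_zero,
      Real.zero_rpow (neg_ne_zero.mpr (by positivity)), add_zero]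
    exact Real.rpow_nonneg ht.le _
  · rcases le_total u t with h | h
    · calc t ^ (-α) * u ^ (-γ) ≤ u ^ (-α) * u ^ (-γ) :=
            mul_le_mul_of_nonneg_right (rpow_anti hu h hα.le) (Real.rpow_nonneg hu.le _)
      _ = u ^ (-(α+γ)) := by rw [← Real.rpow_add hu, show -α + -γ = -(α+γ) by ring]
      _ ≤ _ := le_add_of_nonneg_left (Real.rpow_nonneg ht.le _)
    · calc t ^ (-α) * u ^ (-γ) ≤ t ^ (-α) * t ^ (-γ) :=
            mul_le_mul_of_nonneg_left (rpow_anti ht h hγ.le) (Real.rpow_nonneg ht.le _)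
      _ = t ^ (-(α+γ)) := by rw [← Real.rpow_add ht, show -α + -γ = -(α+γ) by ring]
      _ ≤ _ := le_add_of_nonneg_right (Real.rpow_nonneg hu.le _)

private lemma Jcore_ii {α γ t0 : ℝ} (hα : 0 < α) (hγ : 0 < γ) (hαγ : α + γ < 1) (ht0 : |t0| ≤ 1) :
    ∫⁻ t in Ioo (0:ℝ) (1/2), ENNReal.ofReal (t ^ (-α) * |t - t0| ^ (-γ))
      ≤ ENNReal.ofReal ((1/2:ℝ) ^ (1-(α+γ)) / (1-(α+γ)) + 2 * ((2:ℝ) ^ (1-(α+γ)) / (1-(α+γ)))) := by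
  have h1 : ∫⁻ t in Ioo (0:ℝ) (1/2), ENNReal.ofReal (t ^ (-α) * |t - t0| ^ (-γ))
      ≤ ∫⁻ t in Ioo (0:ℝ) (1/2),
          (ENNReal.ofReal (t ^ (-(α+γ))) + ENNReal.ofReal (|t - t0| ^ (-(α+γ)))) := by
    refine setLIntegral_mono' measurableSet_Ioo fun t ht => ?_
    exact le_trans (ENNReal.ofReal_le_ofReal (prod_rpow_le hα hγ ht.1 (abs_nonneg _)))
      ENNReal.ofReal_add_le
  refine h1.trans ?_
  rw [lintegral_add_left (by fun_prop)]
  have h3 : ∫⁻ t in Ioo (0:ℝ) (1/2), ENNReal.ofReal (|t - t0| ^ (-(α+γ)))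
      ≤ ENNReal.ofReal (2 * ((2:ℝ) ^ (1-(α+γ)) / (1-(α+γ)))) := by
    refine le_trans (lintegral_mono_set ?_) (lintL3 (by linarith) t0 2 (by norm_num))
    intro t ht
    rcases abs_le.mp ht0 with ⟨hl, hr⟩
    rcases ht with ⟨ht1, ht2⟩
    exact Set.mem_Ioo.mpr ⟨by linarith, by linarith⟩
  rw [lintL1 (p := α + γ) (by linarith) (1/2) (by norm_num)]
  refine le_trans (add_le_add_right h3 _) ?_
  rw [← ENNReal.ofReal_add
    (div_nonneg (Real.rpow_nonneg (by norm_num) _) (by linarith))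
    (mul_nonneg (by norm_num) (div_nonneg (Real.rpow_nonneg (by norm_num) _) (by linarith)))]
private lemma Jcore_i {α γ t0 : ℝ} (hα : 0 < α) (hα1 : α < 1) (hγ : 0 < γ) (hγ1 : γ < 1)
    (hαγ : 1 < α + γ) (ht0 : t0 ≠ 0) :
    ∫⁻ t in Ioo (0:ℝ) (1/2), ENNReal.ofReal (t ^ (-α) * |t - t0| ^ (-γ))
      ≤ ENNReal.ofReal (((1/2:ℝ) ^ (1-α-γ) / (1-α) + (1/2:ℝ) ^ (-α) * (2 * ((3:ℝ) ^ (1-γ) / (1-γ)))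
          + (1/2:ℝ) ^ (-γ) * ((2:ℝ) ^ (1-α-γ) / (α+γ-1))) * |t0| ^ (1-α-γ)) := by
  set r := |t0| with hr_def
  have hr : 0 < r := abs_pos.mpr ht0
  have hrhalf : (0:ℝ) < r / 2 := by linarith
  have ht0le : t0 ≤ r := le_abs_self t0
  have ht0ge : -r ≤ t0 := neg_abs_le t0
  have P1 : ∫⁻ t in Ioo (0:ℝ) (r/2), ENNReal.ofReal (t ^ (-α) * |t - t0| ^ (-γ))
      ≤ ENNReal.ofReal (((1/2:ℝ) ^ (1-α-γ) / (1-α)) * r ^ (1-α-γ)) := by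
    have step : ∫⁻ t in Ioo (0:ℝ) (r/2), ENNReal.ofReal (t ^ (-α) * |t - t0| ^ (-γ))
        ≤ ∫⁻ t in Ioo (0:ℝ) (r/2),
            ENNReal.ofReal ((r/2) ^ (-γ)) * ENNReal.ofReal (t ^ (-α)) := by
      refine setLIntegral_mono' measurableSet_Ioo fun t ht => ?_
      rw [← ENNReal.ofReal_mul (Real.rpow_nonneg hrhalf.le _)]
      apply ENNReal.ofReal_le_ofReal
      have habs : r/2 ≤ |t - t0| := by
        have h1 := abs_sub_abs_le_abs_sub t0 t
        rw [abs_sub_comm t0 t] at h1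
        rw [abs_of_pos ht.1] at h1
        linarith [ht.2]
      calc t ^ (-α) * |t - t0| ^ (-γ) ≤ t ^ (-α) * (r/2) ^ (-γ) :=
            mul_le_mul_of_nonneg_left (rpow_anti hrhalf habs hγ.le) (Real.rpow_nonneg ht.1.le _)
      _ = (r/2) ^ (-γ) * t ^ (-α) := mul_comm _ _
    refine step.trans ?_
    rw [lintegral_const_mul' _ _ ENNReal.ofReal_ne_top, lintL1 (by linarith) (r/2) hrhalf,
      ← ENNReal.ofReal_mul (Real.rpow_nonneg hrhalf.le _)]
    apply le_of_eq; congr 1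
    calc (r/2) ^ (-γ) * ((r/2) ^ (1-α) / (1-α)) = ((r/2) ^ (-γ) * (r/2) ^ (1-α)) / (1-α) := by
          ring
    _ = (r/2) ^ (1-α-γ) / (1-α) := by
          rw [← Real.rpow_add hrhalf, show -γ + (1-α) = 1-α-γ by ring]
    _ = (r ^ (1-α-γ) * (1/2:ℝ) ^ (1-α-γ)) / (1-α) := by
          rw [show r/2 = r * (1/2) by ring, Real.mul_rpow hr.le (by norm_num)]
    _ = ((1/2:ℝ) ^ (1-α-γ) / (1-α)) * r ^ (1-α-γ) := by ring
  have P2 : ∫⁻ t in Ico (r/2) (2*r), ENNReal.ofReal (t ^ (-α) * |t - t0| ^ (-γ))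
      ≤ ENNReal.ofReal (((1/2:ℝ) ^ (-α) * (2 * ((3:ℝ) ^ (1-γ) / (1-γ)))) * r ^ (1-α-γ)) := by
    have step : ∫⁻ t in Ico (r/2) (2*r), ENNReal.ofReal (t ^ (-α) * |t - t0| ^ (-γ))
        ≤ ∫⁻ t in Ico (r/2) (2*r),
            ENNReal.ofReal ((r/2) ^ (-α)) * ENNReal.ofReal (|t - t0| ^ (-γ)) := by
      refine setLIntegral_mono' measurableSet_Ico fun t ht => ?_
      rw [← ENNReal.ofReal_mul (Real.rpow_nonneg hrhalf.le _)]
      exact ENNReal.ofReal_le_ofReal (mul_le_mul_of_nonneg_right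
        (rpow_anti hrhalf ht.1 hα.le) (Real.rpow_nonneg (abs_nonneg _) _))
    refine step.trans ?_
    rw [lintegral_const_mul' _ _ ENNReal.ofReal_ne_top]
    have hsub : Ico (r/2) (2*r) ⊆ Ioo (t0 - 3*r) (t0 + 3*r) := by
      intro t ht
      exact Set.mem_Ioo.mpr ⟨by linarith [ht.1], by linarith [ht.2]⟩
    have hint := le_trans (lintegral_mono_set hsub) (lintL3 (p := γ) (by linarith) t0 (3*r) (by linarith))
    refine le_trans (mul_le_mul_right hint _) ?_
    rw [← ENNReal.ofReal_mul (Real.rpow_nonneg hrhalf.le _)]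
    apply le_of_eq; congr 1
    calc (r/2) ^ (-α) * (2 * ((3*r) ^ (1-γ) / (1-γ)))
        = (r/2) ^ (-α) * (3*r) ^ (1-γ) * (2 / (1-γ)) := by ring
    _ = (r ^ (-α) * (1/2:ℝ) ^ (-α)) * ((3:ℝ) ^ (1-γ) * r ^ (1-γ)) * (2 / (1-γ)) := by
          rw [show r/2 = r * (1/2) by ring, Real.mul_rpow hr.le (by norm_num),
            Real.mul_rpow (by norm_num : (0:ℝ) ≤ 3) hr.le]
    _ = (r ^ (-α) * r ^ (1-γ)) * ((1/2:ℝ) ^ (-α) * (3:ℝ) ^ (1-γ) * (2 / (1-γ))) := by ring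
    _ = r ^ (1-α-γ) * ((1/2:ℝ) ^ (-α) * (3:ℝ) ^ (1-γ) * (2 / (1-γ))) := by
          rw [← Real.rpow_add hr, show -α + (1-γ) = 1-α-γ by ring]
    _ = ((1/2:ℝ) ^ (-α) * (2 * ((3:ℝ) ^ (1-γ) / (1-γ)))) * r ^ (1-α-γ) := by ring
  have P3 : ∫⁻ t in Ici (2*r), ENNReal.ofReal (t ^ (-α) * |t - t0| ^ (-γ))
      ≤ ENNReal.ofReal (((1/2:ℝ) ^ (-γ) * ((2:ℝ) ^ (1-α-γ) / (α+γ-1))) * r ^ (1-α-γ)) := by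
    rw [setLIntegral_congr (Ioi_ae_eq_Ici (a := 2*r)).symm]
    have step : ∫⁻ t in Ioi (2*r), ENNReal.ofReal (t ^ (-α) * |t - t0| ^ (-γ))
        ≤ ∫⁻ t in Ioi (2*r),
            ENNReal.ofReal ((1/2:ℝ) ^ (-γ)) * ENNReal.ofReal (t ^ (-(α+γ))) := by
      refine setLIntegral_mono' measurableSet_Ioi fun t ht => ?_
      have ht2r : 2*r < t := ht
      have htpos : 0 < t := by linarith
      have hhalf : (0:ℝ) < t/2 := by linarith
      have habs : t/2 ≤ |t - t0| := le_trans (by linarith) (le_abs_self (t - t0))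
      rw [← ENNReal.ofReal_mul (Real.rpow_nonneg (by norm_num) _)]
      apply ENNReal.ofReal_le_ofReal
      calc t ^ (-α) * |t - t0| ^ (-γ) ≤ t ^ (-α) * (t/2) ^ (-γ) :=
            mul_le_mul_of_nonneg_left (rpow_anti hhalf habs hγ.le) (Real.rpow_nonneg htpos.le _)
      _ = (1/2:ℝ) ^ (-γ) * t ^ (-(α+γ)) := by
          rw [show t/2 = t * (1/2) by ring, Real.mul_rpow htpos.le (by norm_num),
            show -(α+γ) = -α + -γ by ring, Real.rpow_add htpos]
          ring
    refine step.trans ?_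
    rw [lintegral_const_mul' _ _ ENNReal.ofReal_ne_top, lintL2 (by linarith) (2*r) (by linarith),
      ← ENNReal.ofReal_mul (Real.rpow_nonneg (by norm_num) _)]
    apply le_of_eq; congr 1
    calc (1/2:ℝ) ^ (-γ) * ((2*r) ^ (1-(α+γ)) / (α+γ-1))
        = (1/2:ℝ) ^ (-γ) * (((2:ℝ) ^ (1-α-γ) * r ^ (1-α-γ)) / (α+γ-1)) := by
          rw [show (1:ℝ)-(α+γ) = 1-α-γ by ring,
            Real.mul_rpow (by norm_num : (0:ℝ) ≤ 2) hr.le]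
    _ = ((1/2:ℝ) ^ (-γ) * ((2:ℝ) ^ (1-α-γ) / (α+γ-1))) * r ^ (1-α-γ) := by ring
  have cover : Ioo (0:ℝ) (1/2) ⊆ Ioo 0 (r/2) ∪ (Ico (r/2) (2*r) ∪ Ici (2*r)) := by
    intro t ht
    rcases lt_or_ge t (r/2) with h | h
    · exact Or.inl ⟨ht.1, h⟩
    · rcases lt_or_ge t (2*r) with h2 | h2
      · exact Or.inr (Or.inl ⟨h, h2⟩)
      · exact Or.inr (Or.inr h2)
  refine le_trans (lintegral_mono_set cover) ?_
  refine le_trans (lintegral_union_le _ _ _) ?_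
  refine le_trans (add_le_add P1 (le_trans (lintegral_union_le _ _ _) (add_le_add P2 P3))) ?_
  have n1 : (0:ℝ) ≤ ((1/2:ℝ) ^ (1-α-γ) / (1-α)) * r ^ (1-α-γ) :=
    mul_nonneg (div_nonneg (Real.rpow_nonneg (by norm_num) _) (by linarith))
      (Real.rpow_nonneg hr.le _)
  have n2 : (0:ℝ) ≤ ((1/2:ℝ) ^ (-α) * (2 * ((3:ℝ) ^ (1-γ) / (1-γ)))) * r ^ (1-α-γ) :=
    mul_nonneg (mul_nonneg (Real.rpow_nonneg (by norm_num) _)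
      (mul_nonneg (by norm_num) (div_nonneg (Real.rpow_nonneg (by norm_num) _) (by linarith))))
      (Real.rpow_nonneg hr.le _)
  have n3 : (0:ℝ) ≤ ((1/2:ℝ) ^ (-γ) * ((2:ℝ) ^ (1-α-γ) / (α+γ-1))) * r ^ (1-α-γ) :=
    mul_nonneg (mul_nonneg (Real.rpow_nonneg (by norm_num) _)
      (div_nonneg (Real.rpow_nonneg (by norm_num) _) (by linarith)))
      (Real.rpow_nonneg hr.le _)
  rw [← ENNReal.ofReal_add n2 n3, ← ENNReal.ofReal_add n1 (add_nonneg n2 n3)]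
  apply le_of_eq; congr 1
  ring

private lemma B2_red (α β γ a b : ℝ) (hβ : 0 < β) :
    B2 α β γ a b ≤ ENNReal.ofReal ((2:ℝ) ^ β) *
      ∫⁻ t in Ioo (0:ℝ) (1/2), ENNReal.ofReal (t ^ (-α) * |a * t + (b - a)| ^ (-γ)) := by
  have step1 : B2 α β γ a b ≤ ∫⁻ u in Ioo (1/2:ℝ) 1,
      ENNReal.ofReal ((2:ℝ) ^ β) * ENNReal.ofReal ((1-u) ^ (-α) * |a*u - b| ^ (-γ)) := by
    refine setLIntegral_mono' measurableSet_Ioo fun u hu => ?_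
    rw [← ENNReal.ofReal_mul (Real.rpow_nonneg (by norm_num) _)]
    apply ENNReal.ofReal_le_ofReal
    have h1 : u ^ (-β) ≤ (2:ℝ) ^ β := by
      rw [← half_rpow]
      exact rpow_anti (by norm_num) hu.1.le hβ.le
    have hX : 0 ≤ (1-u) ^ (-α) * |a*u - b| ^ (-γ) :=
      mul_nonneg (Real.rpow_nonneg (by linarith [hu.2]) _) (Real.rpow_nonneg (abs_nonneg _) _)
    calc u ^ (-β) * (1-u) ^ (-α) * |a*u - b| ^ (-γ)
        = u ^ (-β) * ((1-u) ^ (-α) * |a*u - b| ^ (-γ)) := by ring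
    _ ≤ (2:ℝ) ^ β * ((1-u) ^ (-α) * |a*u - b| ^ (-γ)) := mul_le_mul_of_nonneg_right h1 hX
  refine step1.trans ?_
  rw [lintegral_const_mul' _ _ ENNReal.ofReal_ne_top]
  refine mul_le_mul_right (le_of_eq ?_) _
  have hpre : (fun t : ℝ => 1 - t) ⁻¹' (Ioo (1/2:ℝ) 1) = Ioo 0 (1/2) := by
    ext t; simp only [Set.mem_preimage, Set.mem_Ioo]
    constructor <;> rintro ⟨h1, h2⟩ <;> constructor <;> linarith
  have hs := (Measure.measurePreserving_sub_left volume 1).setLIntegral_comp_preimage_emb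
    (MeasurableEquiv.subLeft 1).measurableEmbedding
    (fun u => ENNReal.ofReal ((1-u) ^ (-α) * |a*u - b| ^ (-γ))) (Ioo (1/2:ℝ) 1)
  rw [hpre] at hs
  rw [← hs]
  refine lintegral_congr fun t => ?_
  rw [show (1:ℝ) - (1 - t) = t by ring, show a*(1-t) - b = -(a*t + (b-a)) by ring, abs_neg]

private lemma J_split (α γ a d : ℝ) (ha : a ≠ 0) :
    ∫⁻ t in Ioo (0:ℝ) (1/2), ENNReal.ofReal (t ^ (-α) * |a * t + d| ^ (-γ))
      = ENNReal.ofReal (|a| ^ (-γ)) *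
        ∫⁻ t in Ioo (0:ℝ) (1/2), ENNReal.ofReal (t ^ (-α) * |t - (-d/a)| ^ (-γ)) := by
  rw [← lintegral_const_mul' _ _ ENNReal.ofReal_ne_top]
  refine lintegral_congr fun t => ?_
  have habs : |a * t + d| = |a| * |t - (-d/a)| := by
    rw [← abs_mul]
    congr 1
    field_simp
    ring
  rw [habs, Real.mul_rpow (abs_nonneg _) (abs_nonneg _),
    ← ENNReal.ofReal_mul (Real.rpow_nonneg (abs_nonneg _) _)]
  congr 1
  ring

private lemma J_dbound {α γ : ℝ} (hα : 0 < α) (hα1 : α < 1) (hγ : 0 < γ) (a d : ℝ)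
    (hd : 0 < |d|) (had : |a| ≤ |d|) :
    ∫⁻ t in Ioo (0:ℝ) (1/2), ENNReal.ofReal (t ^ (-α) * |a * t + d| ^ (-γ))
      ≤ ENNReal.ofReal (((1/2:ℝ) ^ (-γ) * ((1/2:ℝ) ^ (1-α) / (1-α))) * |d| ^ (-γ)) := by
  have hdhalf : (0:ℝ) < |d|/2 := by linarith
  have step : ∫⁻ t in Ioo (0:ℝ) (1/2), ENNReal.ofReal (t ^ (-α) * |a * t + d| ^ (-γ))
      ≤ ∫⁻ t in Ioo (0:ℝ) (1/2),
          ENNReal.ofReal ((|d|/2) ^ (-γ)) * ENNReal.ofReal (t ^ (-α)) := by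
    refine setLIntegral_mono' measurableSet_Ioo fun t ht => ?_
    rw [← ENNReal.ofReal_mul (Real.rpow_nonneg hdhalf.le _)]
    apply ENNReal.ofReal_le_ofReal
    have h1 := abs_sub_abs_le_abs_sub d (-(a*t))
    rw [abs_neg, sub_neg_eq_add] at h1
    have h2 : |a*t| ≤ |d| * (1/2) := by
      rw [abs_mul, abs_of_pos ht.1]
      calc |a| * t ≤ |d| * t := mul_le_mul_of_nonneg_right had ht.1.le
      _ ≤ |d| * (1/2) := mul_le_mul_of_nonneg_left ht.2.le (abs_nonneg _)
    have habs : |d|/2 ≤ |a*t + d| := by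
      rw [show a*t + d = d + a*t by ring]
      linarith
    calc t ^ (-α) * |a*t + d| ^ (-γ) ≤ t ^ (-α) * (|d|/2) ^ (-γ) :=
          mul_le_mul_of_nonneg_left (rpow_anti hdhalf habs hγ.le) (Real.rpow_nonneg ht.1.le _)
    _ = (|d|/2) ^ (-γ) * t ^ (-α) := mul_comm _ _
  refine step.trans ?_
  rw [lintegral_const_mul' _ _ ENNReal.ofReal_ne_top, lintL1 (by linarith) (1/2) (by norm_num),
    ← ENNReal.ofReal_mul (Real.rpow_nonneg hdhalf.le _)]
  apply le_of_eq; congr 1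
  calc (|d|/2) ^ (-γ) * ((1/2:ℝ) ^ (1-α) / (1-α))
      = (|d| ^ (-γ) * (1/2:ℝ) ^ (-γ)) * ((1/2:ℝ) ^ (1-α) / (1-α)) := by
        rw [show |d|/2 = |d| * (1/2) by ring, Real.mul_rpow (abs_nonneg _) (by norm_num)]
  _ = ((1/2:ℝ) ^ (-γ) * ((1/2:ℝ) ^ (1-α) / (1-α))) * |d| ^ (-γ) := by ring
end helpers


/-- Bounds for `𝔅_2`. (i) If `α + γ > 1`, then for every
`q ∈ [0, 1−α]` there is `C > 0` with `𝔅_2(a,b) ≤ C |a|^{−q} |b−a|^{−γ+q}` for all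
`a ≠ 0`, `b − a ≠ 0`. (ii) If `α + γ < 1`, there is `C > 0` with
`𝔅_2(a,b) ≤ C (|a|+|b−a|)^{−γ}` for all `(a, b−a) ≠ (0,0)`, and consequently, for any
`q_1, q_2 ≥ 0` with `q_1 + q_2 ≤ γ`,
`𝔅_2(a,b) ≤ C |a|^{−q_1} |b−a|^{−q_2} |b|^{−γ+q_1+q_2}` whenever `a, b−a, b ≠ 0`. -/
theorem B2_bounds (α β γ : ℝ) (hα : α ∈ Set.Ioo (0 : ℝ) 1) (hβ : β ∈ Set.Ioo (0 : ℝ) 1)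
    (hγ : γ ∈ Set.Ioo (0 : ℝ) 1) :
    (α + γ > 1 → ∀ q : ℝ, q ∈ Set.Icc 0 (1 - α) →
      ∃ C : ℝ, 0 < C ∧ ∀ a b : ℝ, a ≠ 0 → b - a ≠ 0 →
        B2 α β γ a b ≤ ENNReal.ofReal (C * |a| ^ (-q) * |b - a| ^ (-γ + q))) ∧
    (α + γ < 1 →
      ∃ C : ℝ, 0 < C ∧
        (∀ a b : ℝ, ¬(a = 0 ∧ b - a = 0) →
          B2 α β γ a b ≤ ENNReal.ofReal (C * (|a| + |b - a|) ^ (-γ))) ∧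
        (∀ q1 q2 : ℝ, 0 ≤ q1 → 0 ≤ q2 → q1 + q2 ≤ γ →
          ∀ a b : ℝ, a ≠ 0 → b - a ≠ 0 → b ≠ 0 →
            B2 α β γ a b ≤
              ENNReal.ofReal (C * |a| ^ (-q1) * |b - a| ^ (-q2) *
                |b| ^ (-γ + q1 + q2)))) := by

  obtain ⟨hα1, hα2⟩ := hα
  obtain ⟨hβ1, hβ2⟩ := hβ
  obtain ⟨hγ1, hγ2⟩ := hγ
  have h2β : (0:ℝ) < 2 ^ β := Real.rpow_pos_of_pos (by norm_num) _
  have h2γ : (0:ℝ) < 2 ^ γ := Real.rpow_pos_of_pos (by norm_num) _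
  set c0 : ℝ := (1/2:ℝ) ^ (-γ) * ((1/2:ℝ) ^ (1-α) / (1-α)) with hc0_def
  have hc0 : 0 < c0 := mul_pos (Real.rpow_pos_of_pos (by norm_num) _)
    (div_pos (Real.rpow_pos_of_pos (by norm_num) _) (by linarith))
  constructor
  · -- case (i) : α + γ > 1
    intro hαγ q hq
    obtain ⟨hq1, hq2⟩ := hq
    set K : ℝ := (1/2:ℝ) ^ (1-α-γ) / (1-α) + (1/2:ℝ) ^ (-α) * (2 * ((3:ℝ) ^ (1-γ) / (1-γ)))
      + (1/2:ℝ) ^ (-γ) * ((2:ℝ) ^ (1-α-γ) / (α+γ-1)) with hK_def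
    have hK : 0 < K := by
      have k1 : (0:ℝ) < (1/2:ℝ) ^ (1-α-γ) / (1-α) :=
        div_pos (Real.rpow_pos_of_pos (by norm_num) _) (by linarith)
      have k2 : (0:ℝ) < (1/2:ℝ) ^ (-α) * (2 * ((3:ℝ) ^ (1-γ) / (1-γ))) :=
        mul_pos (Real.rpow_pos_of_pos (by norm_num) _)
          (mul_pos (by norm_num) (div_pos (Real.rpow_pos_of_pos (by norm_num) _) (by linarith)))
      have k3 : (0:ℝ) < (1/2:ℝ) ^ (-γ) * ((2:ℝ) ^ (1-α-γ) / (α+γ-1)) :=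
        mul_pos (Real.rpow_pos_of_pos (by norm_num) _)
          (div_pos (Real.rpow_pos_of_pos (by norm_num) _) (by linarith))
      have := add_pos (add_pos k1 k2) k3
      linarith [hK_def ▸ this]
    refine ⟨2 ^ β * c0 + 2 ^ β * K, by positivity, fun a b ha hd => ?_⟩
    have hapos : 0 < |a| := abs_pos.mpr ha
    have hdpos : 0 < |b - a| := abs_pos.mpr hd
    have hT : 0 < |a| ^ (-q) * |b - a| ^ (-γ+q) :=
      mul_pos (Real.rpow_pos_of_pos hapos _) (Real.rpow_pos_of_pos hdpos _)
    refine (B2_red α β γ a b hβ1).trans ?_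
    rcases le_or_gt |a| |b - a| with hcase | hcase
    · refine le_trans (mul_le_mul_right (J_dbound hα1 hα2 hγ1 a (b-a) hdpos hcase) _) ?_
      rw [← ENNReal.ofReal_mul (Real.rpow_nonneg (by norm_num) _)]
      apply ENNReal.ofReal_le_ofReal
      have e1 : |b-a| ^ (-γ) = |b-a| ^ (-q) * |b-a| ^ (-γ+q) := by
        rw [← Real.rpow_add hdpos, show -q + (-γ+q) = -γ by ring]
      have h2 : |b-a| ^ (-q) ≤ |a| ^ (-q) := rpow_anti hapos hcase hq1
      calc (2:ℝ) ^ β * (c0 * |b-a| ^ (-γ))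
          = (2 ^ β * c0) * (|b-a| ^ (-q) * |b-a| ^ (-γ+q)) := by rw [e1]; ring
      _ ≤ (2 ^ β * c0) * (|a| ^ (-q) * |b-a| ^ (-γ+q)) :=
          mul_le_mul_of_nonneg_left
            (mul_le_mul_of_nonneg_right h2 (Real.rpow_nonneg (abs_nonneg _) _))
            (by positivity)
      _ ≤ (2 ^ β * c0 + 2 ^ β * K) * (|a| ^ (-q) * |b-a| ^ (-γ+q)) :=
          mul_le_mul_of_nonneg_right (by linarith [mul_pos h2β hK]) hT.le
      _ = (2 ^ β * c0 + 2 ^ β * K) * |a| ^ (-q) * |b-a| ^ (-γ+q) := by ring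
    · set t0 : ℝ := -(b-a)/a with ht0_def
      have ht0ne : t0 ≠ 0 := div_ne_zero (neg_ne_zero.mpr hd) ha
      have hrr : |t0| = |b-a| / |a| := by rw [ht0_def, abs_div, abs_neg]
      rw [J_split α γ a (b-a) ha]
      refine le_trans (mul_le_mul_right
        (mul_le_mul_right (Jcore_i hα1 hα2 hγ1 hγ2 hαγ ht0ne) _) _) ?_
      rw [← ENNReal.ofReal_mul (Real.rpow_nonneg (abs_nonneg a) _),
        ← ENNReal.ofReal_mul (Real.rpow_nonneg (by norm_num) _)]
      apply ENNReal.ofReal_le_ofReal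
      have e : |a| ^ (-γ) * |t0| ^ (1-α-γ) = |a| ^ (α-1) * |b-a| ^ (1-α-γ) := by
        calc |a| ^ (-γ) * |t0| ^ (1-α-γ)
            = |a| ^ (-γ) * (|b-a| ^ (1-α-γ) * (|a| ^ (1-α-γ))⁻¹) := by
              rw [hrr, Real.div_rpow (abs_nonneg _) (abs_nonneg _), div_eq_mul_inv]
        _ = |a| ^ (-γ) * |a| ^ (-(1-α-γ)) * |b-a| ^ (1-α-γ) := by
              rw [(Real.rpow_neg (abs_nonneg a) (1-α-γ) : |a| ^ (-(1-α-γ)) = (|a| ^ (1-α-γ))⁻¹)]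
              ring
        _ = |a| ^ (α-1) * |b-a| ^ (1-α-γ) := by
              rw [← Real.rpow_add hapos, show -γ + -(1-α-γ) = α-1 by ring]
      have key : |a| ^ (α-1) * |b-a| ^ (1-α-γ) ≤ |a| ^ (-q) * |b-a| ^ (-γ+q) := by
        have h5 : |b-a| ^ (1-α-q) ≤ |a| ^ (1-α-q) :=
          Real.rpow_le_rpow (abs_nonneg _) hcase.le (by linarith)
        have e2 : (|a| ^ (-q) * |b-a| ^ (-γ+q)) * (|a| ^ (α-1+q) * |b-a| ^ (1-α-q))
            = |a| ^ (α-1) * |b-a| ^ (1-α-γ) := by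
          calc (|a| ^ (-q) * |b-a| ^ (-γ+q)) * (|a| ^ (α-1+q) * |b-a| ^ (1-α-q))
              = (|a| ^ (-q) * |a| ^ (α-1+q)) * (|b-a| ^ (-γ+q) * |b-a| ^ (1-α-q)) := by ring
          _ = |a| ^ (α-1) * |b-a| ^ (1-α-γ) := by
              rw [← Real.rpow_add hapos, ← Real.rpow_add hdpos,
                show -q + (α-1+q) = α-1 by ring, show -γ+q + (1-α-q) = 1-α-γ by ring]
        have e3 : |a| ^ (α-1+q) * |b-a| ^ (1-α-q) ≤ 1 := by
          calc |a| ^ (α-1+q) * |b-a| ^ (1-α-q) ≤ |a| ^ (α-1+q) * |a| ^ (1-α-q) :=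
                mul_le_mul_of_nonneg_left h5 (Real.rpow_nonneg (abs_nonneg _) _)
          _ = 1 := by
                rw [← Real.rpow_add hapos, show α-1+q + (1-α-q) = (0:ℝ) by ring, Real.rpow_zero]
        calc |a| ^ (α-1) * |b-a| ^ (1-α-γ)
            = (|a| ^ (-q) * |b-a| ^ (-γ+q)) * (|a| ^ (α-1+q) * |b-a| ^ (1-α-q)) := e2.symm
        _ ≤ (|a| ^ (-q) * |b-a| ^ (-γ+q)) * 1 := mul_le_mul_of_nonneg_left e3 hT.le
        _ = |a| ^ (-q) * |b-a| ^ (-γ+q) := mul_one _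
      calc (2:ℝ) ^ β * (|a| ^ (-γ) * (K * |t0| ^ (1-α-γ)))
          = (2 ^ β * K) * (|a| ^ (-γ) * |t0| ^ (1-α-γ)) := by ring
      _ = (2 ^ β * K) * (|a| ^ (α-1) * |b-a| ^ (1-α-γ)) := by rw [e]
      _ ≤ (2 ^ β * K) * (|a| ^ (-q) * |b-a| ^ (-γ+q)) :=
          mul_le_mul_of_nonneg_left key (by positivity)
      _ ≤ (2 ^ β * c0 + 2 ^ β * K) * (|a| ^ (-q) * |b-a| ^ (-γ+q)) :=
          mul_le_mul_of_nonneg_right (by linarith [mul_pos h2β hc0]) hT.le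
      _ = (2 ^ β * c0 + 2 ^ β * K) * |a| ^ (-q) * |b-a| ^ (-γ+q) := by ring
  · -- case (ii) : α + γ < 1
    intro hαγ
    set Cc : ℝ := (1/2:ℝ) ^ (1-(α+γ)) / (1-(α+γ)) + 2 * ((2:ℝ) ^ (1-(α+γ)) / (1-(α+γ)))
      with hCc_def
    have hCc : 0 < Cc := by
      have k1 : (0:ℝ) < (1/2:ℝ) ^ (1-(α+γ)) / (1-(α+γ)) :=
        div_pos (Real.rpow_pos_of_pos (by norm_num) _) (by linarith)
      have k2 : (0:ℝ) < 2 * ((2:ℝ) ^ (1-(α+γ)) / (1-(α+γ))) :=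
        mul_pos (by norm_num) (div_pos (Real.rpow_pos_of_pos (by norm_num) _) (by linarith))
      have := add_pos k1 k2
      linarith [hCc_def ▸ this]
    have hC : 0 < 2 ^ β * 2 ^ γ * (c0 + Cc) := by positivity
    have main : ∀ a b : ℝ, ¬(a = 0 ∧ b - a = 0) →
        B2 α β γ a b ≤ ENNReal.ofReal (2 ^ β * 2 ^ γ * (c0 + Cc) * (|a| + |b - a|) ^ (-γ)) := by
      intro a b hnot
      have hor := not_and_or.mp hnot
      have hS : 0 < |a| + |b - a| := by
        rcases hor with h | h
        · linarith [abs_pos.mpr h, abs_nonneg (b - a)]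
        · linarith [abs_pos.mpr h, abs_nonneg a]
      have hSγ : (0:ℝ) ≤ (|a| + |b - a|) ^ (-γ) := Real.rpow_nonneg hS.le _
      refine (B2_red α β γ a b hβ1).trans ?_
      rcases le_or_gt |a| |b - a| with hcase | hcase
      · have hdpos : 0 < |b - a| := by
          rcases hor with h | h
          · exact lt_of_lt_of_le (abs_pos.mpr h) hcase
          · exact abs_pos.mpr h
        refine le_trans (mul_le_mul_right (J_dbound hα1 hα2 hγ1 a (b-a) hdpos hcase) _) ?_
        rw [← ENNReal.ofReal_mul (Real.rpow_nonneg (by norm_num) _)]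
        apply ENNReal.ofReal_le_ofReal
        have h1 : |b-a| ^ (-γ) ≤ ((|a| + |b-a|)/2) ^ (-γ) :=
          rpow_anti (by linarith) (by linarith) hγ1.le
        have h2 : ((|a| + |b-a|)/2) ^ (-γ) = 2 ^ γ * (|a| + |b-a|) ^ (-γ) := by
          rw [show (|a| + |b-a|)/2 = (|a| + |b-a|) * (1/2) by ring,
            Real.mul_rpow hS.le (by norm_num), half_rpow]
          ring
        calc (2:ℝ) ^ β * (c0 * |b-a| ^ (-γ))
            ≤ 2 ^ β * (c0 * (2 ^ γ * (|a| + |b-a|) ^ (-γ))) := by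
              refine mul_le_mul_of_nonneg_left (mul_le_mul_of_nonneg_left ?_ hc0.le) h2β.le
              rw [← h2]; exact h1
        _ = (2 ^ β * 2 ^ γ * c0) * (|a| + |b-a|) ^ (-γ) := by ring
        _ ≤ (2 ^ β * 2 ^ γ * (c0 + Cc)) * (|a| + |b-a|) ^ (-γ) := by
              refine mul_le_mul_of_nonneg_right ?_ hSγ
              linarith [mul_pos (mul_pos h2β h2γ) hCc]
      · have ha : a ≠ 0 := by
          intro h
          rw [h, abs_zero] at hcase
          exact absurd hcase (not_lt.mpr (abs_nonneg _))
        have hapos : 0 < |a| := abs_pos.mpr ha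
        set t0 : ℝ := -(b-a)/a with ht0_def
        have hrr : |t0| = |b-a| / |a| := by rw [ht0_def, abs_div, abs_neg]
        have ht0le : |t0| ≤ 1 := by rw [hrr]; exact (div_le_one hapos).mpr hcase.le
        rw [J_split α γ a (b-a) ha]
        refine le_trans (mul_le_mul_right
          (mul_le_mul_right (Jcore_ii hα1 hγ1 hαγ ht0le) _) _) ?_
        rw [← ENNReal.ofReal_mul (Real.rpow_nonneg (abs_nonneg a) _),
          ← ENNReal.ofReal_mul (Real.rpow_nonneg (by norm_num) _)]
        apply ENNReal.ofReal_le_ofReal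
        have h1 : |a| ^ (-γ) ≤ ((|a| + |b-a|)/2) ^ (-γ) :=
          rpow_anti (by linarith) (by linarith) hγ1.le
        have h2 : ((|a| + |b-a|)/2) ^ (-γ) = 2 ^ γ * (|a| + |b-a|) ^ (-γ) := by
          rw [show (|a| + |b-a|)/2 = (|a| + |b-a|) * (1/2) by ring,
            Real.mul_rpow hS.le (by norm_num), half_rpow]
          ring
        calc (2:ℝ) ^ β * (|a| ^ (-γ) * Cc)
            ≤ 2 ^ β * ((2 ^ γ * (|a| + |b-a|) ^ (-γ)) * Cc) := by
              refine mul_le_mul_of_nonneg_left (mul_le_mul_of_nonneg_right ?_ hCc.le) h2β.le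
              rw [← h2]; exact h1
        _ = (2 ^ β * 2 ^ γ * Cc) * (|a| + |b-a|) ^ (-γ) := by ring
        _ ≤ (2 ^ β * 2 ^ γ * (c0 + Cc)) * (|a| + |b-a|) ^ (-γ) := by
              refine mul_le_mul_of_nonneg_right ?_ hSγ
              linarith [mul_pos (mul_pos h2β h2γ) hc0]
    refine ⟨2 ^ β * 2 ^ γ * (c0 + Cc), hC, main, ?_⟩
    intro q1 q2 hq1 hq2 hsum a b ha hd hb
    have hS : 0 < |a| + |b - a| := by linarith [abs_pos.mpr ha, abs_nonneg (b - a)]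
    refine (main a b (fun h => ha h.1)).trans ?_
    apply ENNReal.ofReal_le_ofReal
    have hbS : |b| ≤ |a| + |b - a| := by
      calc |b| = |a + (b - a)| := by rw [show a + (b - a) = b by ring]
      _ ≤ |a| + |b - a| := abs_add_le _ _
    have e : (|a| + |b-a|) ^ (-γ)
        = (|a| + |b-a|) ^ (-q1) * (|a| + |b-a|) ^ (-q2) * (|a| + |b-a|) ^ (-γ+q1+q2) := by
      rw [← Real.rpow_add hS, ← Real.rpow_add hS]
      congr 1
      ring
    have m1 : (|a| + |b-a|) ^ (-q1) ≤ |a| ^ (-q1) :=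
      rpow_anti (abs_pos.mpr ha) (by linarith [abs_nonneg (b-a)]) hq1
    have m2 : (|a| + |b-a|) ^ (-q2) ≤ |b-a| ^ (-q2) :=
      rpow_anti (abs_pos.mpr hd) (by linarith [abs_nonneg a]) hq2
    have m3 : (|a| + |b-a|) ^ (-γ+q1+q2) ≤ |b| ^ (-γ+q1+q2) := by
      have := rpow_anti (c := γ - q1 - q2) (abs_pos.mpr hb) hbS (by linarith)
      rw [(by ring : -(γ-q1-q2) = -γ+q1+q2)] at this
      exact this
    have m : (|a| + |b-a|) ^ (-q1) * (|a| + |b-a|) ^ (-q2) * (|a| + |b-a|) ^ (-γ+q1+q2)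
        ≤ |a| ^ (-q1) * |b-a| ^ (-q2) * |b| ^ (-γ+q1+q2) := by
      refine mul_le_mul (mul_le_mul m1 m2 (Real.rpow_nonneg hS.le _)
        (Real.rpow_nonneg (abs_nonneg a) _)) m3 (Real.rpow_nonneg hS.le _) ?_
      exact mul_nonneg (Real.rpow_nonneg (abs_nonneg a) _) (Real.rpow_nonneg (abs_nonneg _) _)
    calc 2 ^ β * 2 ^ γ * (c0 + Cc) * (|a| + |b-a|) ^ (-γ)
        = (2 ^ β * 2 ^ γ * (c0 + Cc)) *
          ((|a| + |b-a|) ^ (-q1) * (|a| + |b-a|) ^ (-q2) * (|a| + |b-a|) ^ (-γ+q1+q2)) := by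
          rw [← e]
    _ ≤ (2 ^ β * 2 ^ γ * (c0 + Cc)) * (|a| ^ (-q1) * |b-a| ^ (-q2) * |b| ^ (-γ+q1+q2)) :=
          mul_le_mul_of_nonneg_left m hC.le
    _ = 2 ^ β * 2 ^ γ * (c0 + Cc) * |a| ^ (-q1) * |b-a| ^ (-q2) * |b| ^ (-γ+q1+q2) := by ring
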